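/- For every finite forest J and every integer k ≥ 1, there is a rooted tree (T, r) and a family of limbs (T_q : q ∈ V(J)) in (T, r) such that no two limbs of the family share an end, and the k-overlap graph of this family is isomorphic to J (via the identity map on V(J)). -/

import Mathlib

/-- `u` is a child of `v` in the tree `G` rooted at `r`. -/
def IsChild {V : Type} (G : SimpleGraph V) (r v u : V) : Prop :=
  G.Adj v u ∧ G.dist r u = G.dist r v + 1

/-- `v` is a leaf of the rooted tree `(G, r)`. -/
def IsRootedLeaf {V : Type} (G : SimpleGraph V) (r v : V) : Prop :=
  ∀ u, ¬ IsChild G r v u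

/-- `v` is an ancestor of `u` in the tree `G` rooted at `r`: `v` lies on the path of the
tree from `u` to `r`. -/
def IsAncestor {V : Type} (G : SimpleGraph V) (r u v : V) : Prop :=
  G.dist u v + G.dist v r = G.dist u r

/-- `x` lies on the (unique) path of the tree `G` between `a` and `b`. -/
def OnTreePath {V : Type} (G : SimpleGraph V) (a b x : V) : Prop :=
  G.dist a x + G.dist x b = G.dist a b

/-- The pair `(leaf, start)` determines a limb of the rooted tree `(G, r)`: a path of
positive length from a leaf `≠ r` to one of its ancestors. -/
def IsLimb {V : Type} (G : SimpleGraph V) (r leaf start : V) : Prop :=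
  IsRootedLeaf G r leaf ∧ leaf ≠ r ∧ IsAncestor G r leaf start ∧ start ≠ leaf

/-- `x` lies in the interior of the limb from `leaf` to `start`. -/
def InLimbInterior {V : Type} (G : SimpleGraph V) (leaf start x : V) : Prop :=
  OnTreePath G leaf start x ∧ x ≠ leaf ∧ x ≠ start

/-- The adjacency relation of the `k`-overlap graph of a family of limbs. -/
def OverlapRel {V Q : Type} (G : SimpleGraph V) (leaf start : Q → V) (k : ℕ)
    (q₁ q₂ : Q) : Prop :=
  k ≤ {x | InLimbInterior G (leaf q₁) (start q₁) x ∧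
          InLimbInterior G (leaf q₂) (start q₂) x ∧
          ∀ q, q ≠ q₁ → q ≠ q₂ → ¬ OnTreePath G (leaf q) (start q) x}.ncard

open SimpleGraph

set_option linter.unusedSectionVars false

namespace Stmt6Aux

section AnyGraph
variable {V : Type} {G : SimpleGraph V}

lemma isPath_of_length_eq_dist {u v : V} (p : G.Walk u v) (h : p.length = G.dist u v) :
    p.IsPath := by
  classical
  induction p with
  | nil => simp
  | @cons a b w hadj q ih =>
    have hbv : G.dist b w ≤ q.length := SimpleGraph.dist_le q
    have hub : G.dist a w ≤ G.dist b w + 1 := by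
      obtain ⟨w', hw'⟩ := SimpleGraph.Reachable.exists_walk_length_eq_dist ⟨q⟩
      calc G.dist a w ≤ (Walk.cons hadj w').length := SimpleGraph.dist_le _
        _ = G.dist b w + 1 := by simp [hw']
    simp only [Walk.length_cons] at h
    have hq : q.length = G.dist b w := by omega
    rw [Walk.cons_isPath_iff]
    refine ⟨ih hq, fun hmem => ?_⟩
    have hsplit := q.take_spec hmem
    have hlen : (q.takeUntil a hmem).length + (q.dropUntil a hmem).length = q.length := by
      rw [← Walk.length_append, hsplit]
    have hdrop : G.dist a w ≤ (q.dropUntil a hmem).length := SimpleGraph.dist_le _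
    by_cases hba : b = a
    · subst hba; omega
    · have htake : (q.takeUntil a hmem).length ≠ 0 := by
        intro h0
        exact hba (Walk.eq_of_length_eq_zero h0)
      omega

lemma acyclic_path_length (hG : G.IsAcyclic) {u v : V} (p : G.Walk u v) (hp : p.IsPath) :
    p.length = G.dist u v := by
  classical
  obtain ⟨q, hq⟩ := SimpleGraph.Reachable.exists_walk_length_eq_dist ⟨p⟩
  have hb : q.bypass.IsPath := q.bypass_isPath
  have heq : p = q.bypass := by
    have := hG.path_unique ⟨p, hp⟩ ⟨q.bypass, hb⟩
    exact congrArg Subtype.val this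
  have h1 : p.length ≤ G.dist u v := by
    rw [heq, ← hq]
    exact q.length_bypass_le
  exact le_antisymm h1 (SimpleGraph.dist_le p)

end AnyGraph

section General
variable {V : Type} (f : V → V) (r : V) (dep : V → ℕ)

/-- the tree graph generated by a parent function -/
def tg : SimpleGraph V := SimpleGraph.fromRel (fun u v => u ≠ r ∧ f u = v)

variable (h1 : ∀ v, dep v = 0 ↔ v = r) (h2 : ∀ v, v ≠ r → dep (f v) + 1 = dep v)

lemma tg_adj {u v : V} : (tg f r).Adj u v ↔
    u ≠ v ∧ ((u ≠ r ∧ f u = v) ∨ (v ≠ r ∧ f v = u)) := by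
  simp [tg, SimpleGraph.fromRel_adj]

include h2 in
lemma adj_step {u v : V} (h : (tg f r).Adj u v) :
    dep u = dep v + 1 ∨ dep v = dep u + 1 := by
  rw [tg_adj] at h
  rcases h.2 with ⟨hu, hf⟩ | ⟨hv, hf⟩
  · left; rw [← hf]; exact (h2 u hu).symm
  · right; rw [← hf]; exact (h2 v hv).symm

include h1 h2 in
lemma adj_parent {v : V} (hv : v ≠ r) : (tg f r).Adj v (f v) := by
  rw [tg_adj]
  refine ⟨fun he => ?_, Or.inl ⟨hv, rfl⟩⟩
  · have := h2 v hv; rw [← he] at this; omega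

include h1 h2 in
lemma dep_iter {v : V} {i : ℕ} (hi : i ≤ dep v) : dep (f^[i] v) = dep v - i := by
  induction i with
  | zero => simp
  | succ n ih =>
    have hn : n ≤ dep v := by omega
    have h' := ih hn
    have hne : f^[n] v ≠ r := by
      intro he
      rw [(h1 _).mpr he] at h'
      omega
    rw [Function.iterate_succ_apply']
    have := h2 _ hne
    omega

include h1 h2 in
lemma exists_upPath {v : V} {i : ℕ} (hi : i ≤ dep v) :
    ∃ p : (tg f r).Walk v (f^[i] v), p.length = i ∧ p.IsPath ∧
      (∀ x, x ∈ p.support ↔ ∃ j, j ≤ i ∧ x = f^[j] v) := by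
  induction i generalizing v with
  | zero =>
    refine ⟨Walk.nil, by simp, by simp, fun x => ?_⟩
    show x ∈ [v] ↔ _
    simp only [List.mem_singleton]
    constructor
    · rintro rfl; exact ⟨0, le_refl _, rfl⟩
    · rintro ⟨j, hj, rfl⟩; interval_cases j; simp
  | succ n ih =>
    have hvr : v ≠ r := by
      intro he; have := (h1 v).mpr he; omega
    have hdep : n ≤ dep (f v) := by have := h2 v hvr; omega
    obtain ⟨p, hl, hpath, hs⟩ := ih hdep
    have he : f^[n] (f v) = f^[n+1] v := (Function.iterate_succ_apply f n v).symm
    have hnotmem : v ∉ p.support := by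
      intro hmem
      obtain ⟨j, hj, heq⟩ := (hs v).mp hmem
      have hdj : dep (f^[j] (f v)) = dep (f v) - j := dep_iter f r dep h1 h2 (by omega)
      rw [← heq] at hdj
      have := h2 v hvr
      omega
    refine ⟨(Walk.cons (adj_parent f r dep h1 h2 hvr) p).copy rfl (by rw [he]),
      by simp [hl], by simp [Walk.cons_isPath_iff, hpath, hnotmem], ?_⟩
    intro x
    rw [Walk.support_copy, Walk.support_cons, List.mem_cons, hs x]
    constructor
    · rintro (rfl | ⟨j, hj, rfl⟩)
      · exact ⟨0, by omega, rfl⟩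
      · exact ⟨j + 1, by omega, (Function.iterate_succ_apply f j v).symm⟩
    · rintro ⟨j, hj, rfl⟩
      match j with
      | 0 => left; rfl
      | j + 1 =>
        right
        exact ⟨j, by omega, Function.iterate_succ_apply f j v⟩

include h1 h2 in
lemma iter_dep_eq_root (v : V) : f^[dep v] v = r := by
  have := dep_iter f r dep h1 h2 (le_refl (dep v))
  rw [Nat.sub_self] at this
  exact (h1 _).mp this

include h1 h2 in
lemma reach_root (v : V) : (tg f r).Reachable v r := by
  obtain ⟨p, -, -⟩ := exists_upPath f r dep h1 h2 (le_refl (dep v))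
  rw [iter_dep_eq_root f r dep h1 h2 v] at p
  exact ⟨p⟩

include h1 h2 in
lemma tg_connected : (tg f r).Connected := by
  rw [connected_iff]
  exact ⟨fun u v => (reach_root f r dep h1 h2 u).trans (reach_root f r dep h1 h2 v).symm, ⟨r⟩⟩

include h2 in
lemma walk_dep_le {u w : V} (p : (tg f r).Walk u w) :
    dep u ≤ dep w + p.length ∧ dep w ≤ dep u + p.length := by
  induction p with
  | nil => simp
  | cons h q ih =>
    have := adj_step f r dep h2 h
    simp only [Walk.length_cons]
    omega

include h1 h2 in
lemma dist_root (v : V) : (tg f r).dist r v = dep v := by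
  have h3 := iter_dep_eq_root f r dep h1 h2 v
  obtain ⟨p, hl, -, -⟩ := exists_upPath f r dep h1 h2 (le_refl (dep v))
  apply le_antisymm
  · calc (tg f r).dist r v = (tg f r).dist v r := dist_comm ..
    _ ≤ (p.copy rfl h3).length := dist_le _
    _ = dep v := by simpa using hl
  · obtain ⟨q, hq⟩ := (reach_root f r dep h1 h2 v).symm.exists_walk_length_eq_dist
    have := walk_dep_le f r dep h2 q
    rw [hq] at this
    have hr : dep r = 0 := (h1 r).mpr rfl
    omega

include h1 h2 in
lemma dist_iter {v : V} {i : ℕ} (hi : i ≤ dep v) : (tg f r).dist v (f^[i] v) = i := by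
  obtain ⟨p, hl, -, -⟩ := exists_upPath f r dep h1 h2 hi
  apply le_antisymm
  · have := dist_le p; omega
  · obtain ⟨q, hq⟩ := SimpleGraph.Reachable.exists_walk_length_eq_dist ⟨p⟩
    have := walk_dep_le f r dep h2 q
    rw [hq] at this
    have := dep_iter f r dep h1 h2 hi
    omega

include h1 h2 in
lemma tg_acyclic : (tg f r).IsAcyclic := by
  intro v c hc
  classical
  -- pick a vertex of maximal depth on the cycle
  obtain ⟨u, hu, hmax⟩ : ∃ u ∈ c.support, ∀ y ∈ c.support, dep y ≤ dep u := by
    obtain ⟨u, hu, hmax⟩ := c.support.toFinset.exists_max_image dep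
      ⟨v, by simp [Walk.start_mem_support]⟩
    exact ⟨u, by simpa using hu, fun y hy => hmax y (by simpa using hy)⟩
  have key : ∀ (d : (tg f r).Walk u u), d.IsCycle →
      (∀ y ∈ d.support, dep y ≤ dep u) → False := by
    intro d hdc hds
    cases d with
    | nil => exact hdc.ne_nil rfl
    | cons hadj t =>
      rename_i x
      have h3 := hdc.three_le_length
      have htne : t.darts ≠ [] := by
        intro he
        have : t.length = 0 := by rw [← Walk.length_darts, he]; rfl
        simp only [Walk.length_cons, this] at h3
        omega
      have hdartsne : (Walk.cons hadj t).darts ≠ [] := by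
        simp [Walk.darts_cons]
      set L := (Walk.cons hadj t).darts.getLast hdartsne with hL
      have hgen : ∀ (l m : List ((tg f r).Dart)) (a : (tg f r).Dart) (h : l ≠ []),
          l = a :: m → m ≠ [] → l.getLast h ∈ m := by
        rintro l m a h rfl hm
        rw [List.getLast_cons hm]
        exact List.getLast_mem hm
      have hLmem : L ∈ t.darts := by
        rw [hL]
        exact hgen _ t.darts ⟨(u, x), hadj⟩ hdartsne rfl htne
      have hLsnd : L.snd = u := by rw [hL, Walk.getLast_darts_eq_lastDart]; rfl
      have hLadj : (tg f r).Adj L.fst u := hLsnd ▸ L.adj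
      have hLfst_mem : L.fst ∈ (Walk.cons hadj t).support :=
        Walk.dart_fst_mem_support_of_mem_darts _ (List.getLast_mem hdartsne)
      have hx_mem : x ∈ (Walk.cons hadj t).support := by
        simp [Walk.support_cons, Walk.start_mem_support]
      have hparent : ∀ y, (tg f r).Adj u y → y ∈ (Walk.cons hadj t).support → y = f u := by
        intro y hadjy hymem
        have hdy := hds y hymem
        rcases adj_step f r dep h2 hadjy with h | h
        · rw [tg_adj] at hadjy
          rcases hadjy.2 with ⟨hu', hf⟩ | ⟨hy', hf⟩
          · exact hf.symm
          · exfalso; have := h2 y hy'; rw [hf] at this; omega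
        · omega
      have hxu : x = f u := hparent x hadj hx_mem
      have hyu : L.fst = f u := hparent L.fst hLadj.symm hLfst_mem
      have hxy : L.fst = x := hyu.trans hxu.symm
      -- L.edge = s(u, x) appears both as head of edges and inside t.edges
      have hLedge : L.edge = s(u, x) := by
        have : L.edge = s(L.fst, L.snd) := rfl
        rw [this, hLsnd, hxy, Sym2.eq_swap]
      have hmem_t : s(u, x) ∈ t.edges := by
        rw [← hLedge]
        exact List.mem_map_of_mem hLmem
      have hnodup : ((Walk.cons hadj t).edges).Nodup := hdc.isCircuit.isTrail.edges_nodup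
      rw [Walk.edges_cons, List.nodup_cons] at hnodup
      exact hnodup.1 hmem_t
  apply key (c.rotate u hu) (hc.rotate hu)
  intro y hy
  rw [Walk.support_eq_cons] at hy
  rcases List.mem_cons.mp hy with rfl | hy'
  · exact le_refl _
  · exact hmax y (List.mem_of_mem_tail ((Walk.support_rotate c u hu).mem_iff.mp hy'))

include h1 h2 in
lemma tg_isTree : (tg f r).IsTree :=
  ⟨tg_connected f r dep h1 h2, tg_acyclic f r dep h1 h2⟩


include h1 h2 in
lemma isRootedLeaf_of (v : V) (hv : ∀ u, u ≠ r → f u ≠ v) : IsRootedLeaf (tg f r) r v := by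
  rintro u ⟨hadj, hdist⟩
  rw [dist_root f r dep h1 h2, dist_root f r dep h1 h2] at hdist
  rw [tg_adj] at hadj
  rcases hadj.2 with ⟨hv', hf⟩ | ⟨hu', hf⟩
  · have := h2 v hv'; rw [hf] at this; omega
  · exact hv u hu' hf

include h1 h2 in
lemma isAncestor_iter (v : V) (m : ℕ) (hm : m ≤ dep v) :
    IsAncestor (tg f r) r v (f^[m] v) := by
  unfold IsAncestor
  rw [dist_iter f r dep h1 h2 hm, SimpleGraph.dist_comm, dist_root f r dep h1 h2,
    SimpleGraph.dist_comm, dist_root f r dep h1 h2, dep_iter f r dep h1 h2 hm]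
  omega

include h1 h2 in
lemma onTreePath_iff {ℓ x : V} {m : ℕ} (hm : m ≤ dep ℓ) :
    OnTreePath (tg f r) ℓ (f^[m] ℓ) x ↔ ∃ i, i ≤ m ∧ x = f^[i] ℓ := by
  classical
  have hdls : (tg f r).dist ℓ (f^[m] ℓ) = m := dist_iter f r dep h1 h2 hm
  constructor
  · intro hOn
    rw [OnTreePath, hdls] at hOn
    have hreach1 : (tg f r).Reachable ℓ x :=
      ((tg_connected f r dep h1 h2).preconnected) ℓ x
    have hreach2 : (tg f r).Reachable x (f^[m] ℓ) :=
      ((tg_connected f r dep h1 h2).preconnected) x (f^[m] ℓ)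
    obtain ⟨p1, hp1⟩ := hreach1.exists_walk_length_eq_dist
    obtain ⟨p2, hp2⟩ := hreach2.exists_walk_length_eq_dist
    have hPlen : (p1.append p2).length = m := by rw [Walk.length_append, hp1, hp2, hOn]
    have hPpath : (p1.append p2).IsPath :=
      isPath_of_length_eq_dist _ (by rw [hPlen, hdls])
    obtain ⟨p, hl, hpath, hs⟩ := exists_upPath f r dep h1 h2 hm
    have heq : p1.append p2 = p := by
      have := (tg_acyclic f r dep h1 h2).path_unique ⟨p1.append p2, hPpath⟩ ⟨p, hpath⟩
      exact congrArg Subtype.val this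
    have hx : x ∈ (p1.append p2).support := by
      rw [Walk.mem_support_append_iff]
      left
      exact p1.end_mem_support
    rw [heq] at hx
    exact (hs x).mp hx
  · rintro ⟨i, hi, rfl⟩
    have hii : i ≤ dep ℓ := le_trans hi hm
    have h1d : (tg f r).dist ℓ (f^[i] ℓ) = i := dist_iter f r dep h1 h2 hii
    have h2d : (tg f r).dist (f^[i] ℓ) (f^[m] ℓ) = m - i := by
      have he : f^[m] ℓ = f^[m - i] (f^[i] ℓ) := by
        rw [← Function.iterate_add_apply]
        congr 1
        omega
      rw [he]
      apply dist_iter f r dep h1 h2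
      rw [dep_iter f r dep h1 h2 hii]
      omega
    rw [OnTreePath, h1d, h2d, hdls]
    omega

include h1 h2 in
lemma ancestor_set_spec (S : Set V) (ℓ s : V) (hls : ℓ ∈ S) (hss : s ∈ S)
    (hd : dep s ≤ dep ℓ)
    (hclose : ∀ x ∈ S, x ≠ s → f x ∈ S)
    (hrange : ∀ x ∈ S, dep s ≤ dep x ∧ dep x ≤ dep ℓ)
    (huniq : ∀ x ∈ S, ∀ y ∈ S, dep x = dep y → x = y) :
    (f^[dep ℓ - dep s] ℓ = s) ∧
      ∀ x, (x ∈ S ↔ ∃ i, i ≤ dep ℓ - dep s ∧ x = f^[i] ℓ) := by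
  set m := dep ℓ - dep s with hmdef
  have hmem : ∀ i, i ≤ m → f^[i] ℓ ∈ S := by
    intro i hi
    induction i with
    | zero => simpa
    | succ n ih =>
      have hn : f^[n] ℓ ∈ S := ih (by omega)
      have hdep : dep (f^[n] ℓ) = dep ℓ - n := dep_iter f r dep h1 h2 (by omega)
      have hne : f^[n] ℓ ≠ s := by intro he; rw [he] at hdep; omega
      rw [Function.iterate_succ_apply']
      exact hclose _ hn hne
  have htop : f^[m] ℓ = s := by
    apply huniq _ (hmem m le_rfl) _ hss
    rw [dep_iter f r dep h1 h2 (by omega)]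
    omega
  refine ⟨htop, fun x => ⟨fun hx => ?_, ?_⟩⟩
  · obtain ⟨hx1, hx2⟩ := hrange x hx
    refine ⟨dep ℓ - dep x, by omega, ?_⟩
    apply huniq _ hx _ (hmem _ (by omega))
    rw [dep_iter f r dep h1 h2 (by omega)]
    omega
  · rintro ⟨i, hi, rfl⟩
    exact hmem i hi


end General
section Rooting
variable {Q : Type} (J : SimpleGraph Q)

noncomputable def rt (q : Q) : Q := (J.connectedComponentMk q).out

lemma reach_rt (q : Q) : J.Reachable q (rt J q) := by
  have h : J.connectedComponentMk ((J.connectedComponentMk q).out) =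
      J.connectedComponentMk q := (J.connectedComponentMk q).out_eq
  exact (SimpleGraph.ConnectedComponent.exact h).symm

lemma rt_congr {a b : Q} (h : J.Reachable a b) : rt J a = rt J b := by
  unfold rt
  rw [SimpleGraph.ConnectedComponent.sound h]

noncomputable def Jd (q : Q) : ℕ := J.dist q (rt J q)

lemma Jd_eq_zero_iff (q : Q) : Jd J q = 0 ↔ q = rt J q :=
  (reach_rt J q).dist_eq_zero_iff

lemma exists_par (q : Q) (h : Jd J q ≠ 0) :
    ∃ b, J.Adj q b ∧ J.dist b (rt J q) + 1 = Jd J q := by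
  have key : ∀ (w : Q) (p : J.Walk q w), p.length = J.dist q w → J.dist q w ≠ 0 →
      ∃ b, J.Adj q b ∧ J.dist b w + 1 = J.dist q w := by
    intro w p hp hne
    cases p with
    | nil => exact absurd hp.symm hne
    | cons hadj t =>
      rename_i b
      refine ⟨b, hadj, ?_⟩
      have h1 : J.dist b w ≤ t.length := SimpleGraph.dist_le t
      have h2 : J.dist q w ≤ J.dist b w + 1 := by
        obtain ⟨w', hw'⟩ := SimpleGraph.Reachable.exists_walk_length_eq_dist ⟨t⟩
        calc J.dist q w ≤ (Walk.cons hadj w').length := SimpleGraph.dist_le _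
          _ = J.dist b w + 1 := by simp [hw']
      simp only [Walk.length_cons] at hp
      omega
  obtain ⟨p, hp⟩ := (reach_rt J q).exists_walk_length_eq_dist
  exact key _ p hp h

noncomputable def par (q : Q) : Q :=
  if h : Jd J q = 0 then q else Classical.choose (exists_par J q h)

lemma par_spec (q : Q) (h : Jd J q ≠ 0) :
    J.Adj q (par J q) ∧ J.dist (par J q) (rt J q) + 1 = Jd J q := by
  rw [par, dif_neg h]
  exact Classical.choose_spec (exists_par J q h)

lemma rt_par (q : Q) (h : Jd J q ≠ 0) : rt J (par J q) = rt J q :=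
  (rt_congr J ((par_spec J q h).1.reachable)).symm

lemma Jd_par (q : Q) (h : Jd J q ≠ 0) : Jd J (par J q) + 1 = Jd J q := by
  have := (par_spec J q h).2
  rw [Jd, rt_par J q h]
  exact this

lemma par_adj (q : Q) (h : Jd J q ≠ 0) : J.Adj q (par J q) := (par_spec J q h).1

-- in an acyclic graph, every path realizes the distance, giving unique parents
variable (hJ : J.IsAcyclic)

include hJ in
lemma adj_dist_rt {a b : Q} (hab : J.Adj a b) :
    J.dist a (rt J a) = J.dist b (rt J a) + 1 ∨
      J.dist b (rt J a) = J.dist a (rt J a) + 1 := by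
  classical
  set w := rt J a with hw
  have hreachb : J.Reachable b w := (hab.symm.reachable).trans (reach_rt J a)
  obtain ⟨q0, hq0⟩ := hreachb.exists_walk_length_eq_dist
  set P := q0.bypass with hP
  have hPp : P.IsPath := q0.bypass_isPath
  have hPl : P.length = J.dist b w := acyclic_path_length hJ P hPp
  by_cases ha : a ∈ P.support
  · right
    have htake : (P.takeUntil a ha).length = J.dist b a :=
      acyclic_path_length hJ _ (hPp.takeUntil ha)
    have hdrop : (P.dropUntil a ha).length = J.dist a w :=
      acyclic_path_length hJ _ (hPp.dropUntil ha)
    have hsum : (P.takeUntil a ha).length + (P.dropUntil a ha).length = P.length := by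
      rw [← Walk.length_append, P.take_spec ha]
    have hba : J.dist b a ≠ 0 := fun h0 =>
      hab.ne' ((hab.symm.reachable).dist_eq_zero_iff.mp h0)
    have htri : J.dist b w ≤ J.dist a w + 1 := by
      obtain ⟨w2, hw2⟩ := (reach_rt J a).exists_walk_length_eq_dist
      calc J.dist b w ≤ (Walk.cons hab.symm w2).length := SimpleGraph.dist_le _
        _ = J.dist a w + 1 := by simp [hw2, hw]
    omega
  · left
    have hcons : (Walk.cons hab P).IsPath := by
      rw [Walk.cons_isPath_iff]
      exact ⟨hPp, ha⟩
    have := acyclic_path_length hJ _ hcons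
    simp only [Walk.length_cons] at this
    omega

include hJ in
lemma lower_neighbor_unique {a b₁ b₂ : Q} (h1 : J.Adj a b₁) (h2 : J.Adj a b₂)
    (hd1 : J.dist b₁ (rt J a) + 1 = J.dist a (rt J a))
    (hd2 : J.dist b₂ (rt J a) + 1 = J.dist a (rt J a)) : b₁ = b₂ := by
  classical
  set w := rt J a with hw
  have key : ∀ (b : Q), J.Adj a b → J.dist b w + 1 = J.dist a w →
      ∃ (P : J.Walk a w), P.IsPath ∧ P.support.tail.head? = some b := by
    intro b hab hd
    have hreach : J.Reachable b w := (hab.symm.reachable).trans (reach_rt J a)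
    obtain ⟨q0, hq0⟩ := hreach.exists_walk_length_eq_dist
    have hPp : q0.bypass.IsPath := q0.bypass_isPath
    have hPl : q0.bypass.length = J.dist b w := acyclic_path_length hJ _ hPp
    have ha : a ∉ q0.bypass.support := by
      intro ha
      have hdrop : (q0.bypass.dropUntil a ha).length = J.dist a w :=
        acyclic_path_length hJ _ (hPp.dropUntil ha)
      have hsum : (q0.bypass.takeUntil a ha).length + (q0.bypass.dropUntil a ha).length
          = q0.bypass.length := by
        rw [← Walk.length_append, Walk.take_spec]
      omega
    refine ⟨Walk.cons hab q0.bypass, by rw [Walk.cons_isPath_iff]; exact ⟨hPp, ha⟩, ?_⟩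
    rw [Walk.support_cons, List.tail_cons, Walk.support_eq_cons]
    rfl
  obtain ⟨P1, hP1, ht1⟩ := key b₁ h1 hd1
  obtain ⟨P2, hP2, ht2⟩ := key b₂ h2 hd2
  have heq : P1 = P2 := congrArg Subtype.val (hJ.path_unique ⟨P1, hP1⟩ ⟨P2, hP2⟩)
  rw [heq, ht2] at ht1
  exact (Option.some.injEq _ _).mp ht1.symm

include hJ in
lemma adj_par_or {a b : Q} (hab : J.Adj a b) :
    (Jd J a ≠ 0 ∧ par J a = b) ∨ (Jd J b ≠ 0 ∧ par J b = a) := by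
  have hrt : rt J a = rt J b := rt_congr J hab.reachable
  rcases adj_dist_rt J hJ hab with h | h
  · left
    have hda : Jd J a ≠ 0 := by unfold Jd; omega
    refine ⟨hda, ?_⟩
    exact lower_neighbor_unique J hJ (par_adj J a hda) hab (par_spec J a hda).2 h.symm
  · right
    have hdb : Jd J b ≠ 0 := by
      unfold Jd
      rw [← hrt]
      omega
    refine ⟨hdb, ?_⟩
    apply lower_neighbor_unique J hJ (par_adj J b hdb) hab.symm (par_spec J b hdb).2
    rw [← rt_congr J hab.reachable]
    omega

end Rooting

section Construction
variable {Q : Type} [Fintype Q] (J : SimpleGraph Q) (k : ℕ)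

/-- vertex type of the big tree -/
abbrev VV (Q : Type) (k : ℕ) : Type := Unit ⊕ ((Option Q × Q × Fin (k + 2)) ⊕ Q)

variable {k}

noncomputable def qe : Q ≃ Fin (Fintype.card Q) := Fintype.equivFin Q

def rV : VV Q k := Sum.inl ()
def AV (t : Option Q) (c : Q) (j : Fin (k + 2)) : VV Q k := Sum.inr (Sum.inl (t, c, j))
def LV (q : Q) : VV Q k := Sum.inr (Sum.inr q)

noncomputable def parT (q : Q) : Option Q :=
  if Jd J q = 0 then none else some (par J q)

variable (k)

noncomputable def D (q : Q) : ℕ :=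
  (if h : Jd J q = 0 then 0 else D (par J q)) + (((qe q : ℕ)) + 1) * (k + 2)
termination_by Jd J q
decreasing_by
  have := Jd_par J q h
  omega

noncomputable def Dt (t : Option Q) : ℕ := t.elim 0 (D J k)

noncomputable def dep : VV Q k → ℕ
  | Sum.inl _ => 0
  | Sum.inr (Sum.inl (t, c, j)) => Dt J k t + (qe c : ℕ) * (k + 2) + (j : ℕ) + 1
  | Sum.inr (Sum.inr q) => D J k q + Fintype.card Q * (k + 2) + 1

noncomputable def TOP : Option Q → VV Q k
  | none => rV
  | some q => AV (parT J q) q ⟨k + 1, by omega⟩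

noncomputable def fV : VV Q k → VV Q k
  | Sum.inl _ => rV
  | Sum.inr (Sum.inr q) =>
      AV (some q) (qe.symm ⟨Fintype.card Q - 1,
        by have : 0 < Fintype.card Q := Fintype.card_pos_iff.mpr ⟨q⟩; omega⟩)
        ⟨k + 1, by omega⟩
  | Sum.inr (Sum.inl (t, c, j)) =>
      if hj : (j : ℕ) = 0 then
        if hc : (qe c : ℕ) = 0 then TOP J k t
        else AV t (qe.symm ⟨(qe c : ℕ) - 1, by have := (qe c).isLt; omega⟩)
          ⟨k + 1, by omega⟩
      else AV t c ⟨(j : ℕ) - 1, by have := j.isLt; omega⟩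

lemma D_eq (q : Q) : D J k q = Dt J k (parT J q) + ((qe q : ℕ) + 1) * (k + 2) := by
  rw [D, parT]
  by_cases h : Jd J q = 0 <;> simp [h, Dt]

lemma D_ge (q : Q) : k + 2 ≤ D J k q := by
  rw [D_eq]
  have : 1 * (k+2) ≤ ((qe q : ℕ) + 1) * (k + 2) := Nat.mul_le_mul_right _ (by omega)
  omega

lemma hA1 : ∀ v : VV Q k, dep J k v = 0 ↔ v = rV := by
  rintro (u | (⟨t, c, j⟩ | q)) <;> simp [dep, rV]

lemma hA2 : ∀ v : VV Q k, v ≠ rV → dep J k (fV J k v) + 1 = dep J k v := by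
  rintro (u | (⟨t, c, j⟩ | q)) hne
  · exact absurd rfl hne
  · rw [fV]
    by_cases hj : (j : ℕ) = 0
    · rw [dif_pos hj]
      by_cases hc : (qe c : ℕ) = 0
      · rw [dif_pos hc]
        cases t with
        | none => simp [TOP, dep, rV, hj, hc, Dt]
        | some q' =>
          simp only [TOP, dep, AV]
          have hD := D_eq J k q'
          have hDt : Dt J k (some q') = D J k q' := rfl
          have hexp : ((qe q' : ℕ) + 1) * (k+2) = (qe q' : ℕ)*(k+2) + (k+2) := by ring
          simp only [hj, hc, Nat.zero_mul, Nat.add_zero]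
          omega
      · rw [dif_neg hc]
        simp only [dep, AV, Equiv.apply_symm_apply]
        have : ((qe c : ℕ) - 1) * (k + 2) + (k+2) = (qe c : ℕ) * (k + 2) := by
          have : (qe c : ℕ) - 1 + 1 = (qe c : ℕ) := by omega
          calc ((qe c : ℕ) - 1) * (k + 2) + (k+2) = ((qe c : ℕ) - 1 + 1) * (k+2) := by ring
            _ = (qe c : ℕ) * (k + 2) := by rw [this]
        simp [hj]
        omega
    · rw [dif_neg hj]
      simp only [dep, AV]
      omega
  · simp only [fV, dep, AV, Equiv.apply_symm_apply]
    have hpos : 0 < Fintype.card Q := Fintype.card_pos_iff.mpr ⟨q⟩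
    have hDt : Dt J k (some q) = D J k q := rfl
    have : (Fintype.card Q - 1) * (k + 2) + (k + 2) = Fintype.card Q * (k+2) := by
      have h2 : Fintype.card Q - 1 + 1 = Fintype.card Q := by omega
      calc (Fintype.card Q - 1) * (k + 2) + (k+2)
          = (Fintype.card Q - 1 + 1) * (k+2) := by ring
        _ = Fintype.card Q * (k + 2) := by rw [h2]
    omega

end Construction

section Construction2
variable {Q : Type} [Fintype Q] (J : SimpleGraph Q) (k : ℕ)

lemma mul_add_inj {m a a' b b' : ℕ} (hb : b < m) (hb' : b' < m)
    (h : a * m + b = a' * m + b') : a = a' ∧ b = b' := by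
  have key : ∀ {x x' y y' : ℕ}, y < m → y' < m → x < x' → x * m + y < x' * m + y' := by
    intro x x' y y' hy hy' hx
    calc x * m + y < x * m + m := by omega
      _ = (x + 1) * m := by ring
      _ ≤ x' * m := Nat.mul_le_mul_right m hx
      _ ≤ x' * m + y' := Nat.le_add_right _ _
  rcases lt_trichotomy a a' with hlt | rfl | hlt
  · exact absurd h (Nat.ne_of_lt (key hb hb' hlt))
  · omega
  · exact absurd h.symm (Nat.ne_of_lt (key hb' hb hlt))

variable {k}

noncomputable def startV (q : Q) : VV Q k := AV (parT J q) q ⟨0, by omega⟩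

def Sset (q : Q) : Set (VV Q k) :=
  {x | x = LV q ∨ (∃ c j, x = AV (some q) c j) ∨ (∃ j, x = AV (parT J q) q j)}

variable (k)

lemma dep_AV (t : Option Q) (c : Q) (j : Fin (k+2)) :
    dep J k (AV t c j) = Dt J k t + (qe c : ℕ) * (k + 2) + (j : ℕ) + 1 := rfl

lemma dep_LV (q : Q) :
    dep J k (LV q) = D J k q + Fintype.card Q * (k + 2) + 1 := rfl

lemma D_expand (q : Q) :
    D J k q = Dt J k (parT J q) + (qe q : ℕ) * (k + 2) + (k + 2) := by
  rw [D_eq]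
  ring

lemma dep_startV (q : Q) :
    dep J k (startV J q) = Dt J k (parT J q) + (qe q : ℕ) * (k + 2) + 1 := rfl

lemma card_pos (q : Q) : 0 < Fintype.card Q := Fintype.card_pos_iff.mpr ⟨q⟩

lemma dep_start_le_leaf (q : Q) : dep J k (startV J q) ≤ dep J k (LV q) := by
  rw [dep_startV, dep_LV, D_expand]
  omega

lemma limb_core (q : Q) :
    ((fV J k)^[dep J k (LV q) - dep J k (startV J q)] (LV q) = startV J q) ∧
      ∀ x, (x ∈ Sset J q ↔ ∃ i, i ≤ dep J k (LV q) - dep J k (startV J q) ∧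
        x = (fV J k)^[i] (LV q)) := by
  apply ancestor_set_spec (fV J k) rV (dep J k) (hA1 J k) (hA2 J k)
  · exact Or.inl rfl
  · exact Or.inr (Or.inr ⟨⟨0, by omega⟩, rfl⟩)
  · exact dep_start_le_leaf J k q
  · -- closure
    rintro x (rfl | ⟨c, j, rfl⟩ | ⟨j, rfl⟩) hne
    · exact Or.inr (Or.inl ⟨_, _, rfl⟩)
    · by_cases hj : (j : ℕ) = 0
      · by_cases hc : (qe c : ℕ) = 0
        · refine Or.inr (Or.inr ⟨⟨k+1, by omega⟩, ?_⟩)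
          show fV J k (Sum.inr (Sum.inl (some q, c, j))) = _
          rw [fV, dif_pos hj, dif_pos hc]
          rfl
        · refine Or.inr (Or.inl ⟨qe.symm ⟨(qe c : ℕ) - 1, by have := (qe c).isLt; omega⟩,
            ⟨k+1, by omega⟩, ?_⟩)
          show fV J k (Sum.inr (Sum.inl (some q, c, j))) = _
          rw [fV, dif_pos hj, dif_neg hc]
      · refine Or.inr (Or.inl ⟨c, ⟨(j : ℕ) - 1, by have := j.isLt; omega⟩, ?_⟩)
        show fV J k (Sum.inr (Sum.inl (some q, c, j))) = _
        rw [fV, dif_neg hj]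
    · have hj : (j : ℕ) ≠ 0 := by
        intro h0
        exact hne (by simp [startV, AV, Fin.ext_iff, h0])
      refine Or.inr (Or.inr ⟨⟨(j : ℕ) - 1, by have := j.isLt; omega⟩, ?_⟩)
      show fV J k (Sum.inr (Sum.inl (parT J q, q, j))) = _
      rw [fV, dif_neg hj]
  · -- range
    have hD := D_expand J k q
    rintro x (rfl | ⟨c, j, rfl⟩ | ⟨j, rfl⟩)
    · exact ⟨dep_start_le_leaf J k q, le_refl _⟩
    · rw [dep_startV, dep_AV, dep_LV]
      have hDt : Dt J k (some q) = D J k q := rfl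
      have hcl : (qe c : ℕ) * (k+2) ≤ (Fintype.card Q - 1) * (k + 2) :=
        Nat.mul_le_mul_right _ (by have := (qe c).isLt; omega)
      have hn1 : (Fintype.card Q - 1) * (k+2) + (k+2) = Fintype.card Q * (k+2) := by
        have hpos := card_pos (Q := Q) q
        have h2 : Fintype.card Q - 1 + 1 = Fintype.card Q := by omega
        calc (Fintype.card Q - 1) * (k + 2) + (k+2)
            = (Fintype.card Q - 1 + 1) * (k+2) := by ring
          _ = Fintype.card Q * (k + 2) := by rw [h2]
      have hjk := j.isLt
      omega
    · rw [dep_startV, dep_AV, dep_LV]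
      have hjk := j.isLt
      omega
  · -- uniqueness of depths
    have hD := D_expand J k q
    have hDt : Dt J k (some q) = D J k q := rfl
    have hcl : ∀ c : Q, (qe c : ℕ) * (k+2) ≤ (Fintype.card Q - 1) * (k + 2) :=
      fun c => Nat.mul_le_mul_right _ (by have := (qe c).isLt; omega)
    have hn1 : (Fintype.card Q - 1) * (k+2) + (k+2) = Fintype.card Q * (k+2) := by
      have hpos := card_pos (Q := Q) q
      have h2 : Fintype.card Q - 1 + 1 = Fintype.card Q := by omega
      calc (Fintype.card Q - 1) * (k + 2) + (k+2)
          = (Fintype.card Q - 1 + 1) * (k+2) := by ring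
        _ = Fintype.card Q * (k + 2) := by rw [h2]
    rintro x (rfl | ⟨c, j, rfl⟩ | ⟨j, rfl⟩) y (rfl | ⟨c', j', rfl⟩ | ⟨j', rfl⟩) hdep <;>
      simp only [dep_AV, dep_LV, hDt] at hdep
    · rfl
    · exfalso; have := hcl c'; have := j'.isLt; omega
    · exfalso; have := j'.isLt; omega
    · exfalso; have := hcl c; have := j.isLt; omega
    · -- both middle
      have hmj : ((qe c : ℕ)) * (k+2) + (j : ℕ) = ((qe c' : ℕ)) * (k+2) + (j' : ℕ) := by
        omega
      obtain ⟨hc, hj⟩ := mul_add_inj (j.isLt) (j'.isLt) hmj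
      have hcc : c = c' := qe.injective (Fin.ext hc)
      subst hcc
      have : j = j' := Fin.ext hj
      rw [this]
    · exfalso; have := hcl c; have := j.isLt; have := j'.isLt; omega
    · exfalso; have := j.isLt; omega
    · exfalso; have := hcl c'; have := j.isLt; have := j'.isLt; omega
    · have : j = j' := Fin.ext (by omega)
      rw [this]

end Construction2

section Construction3
variable {Q : Type} [Fintype Q] (J : SimpleGraph Q) (k : ℕ)

/-- the big tree graph -/
noncomputable def GG : SimpleGraph (VV Q k) := tg (fV J k) rV

lemma GG_isTree : (GG J k).IsTree :=
  tg_isTree (fV J k) rV (dep J k) (hA1 J k) (hA2 J k)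

lemma onPath_iff (q : Q) (x : VV Q k) :
    OnTreePath (GG J k) (LV q) (startV J q) x ↔ x ∈ Sset J q := by
  obtain ⟨h1, h2⟩ := limb_core J k q
  have hm : dep J k (LV q) - dep J k (startV J q) ≤ dep J k (LV q) := Nat.sub_le _ _
  conv_lhs => rw [← h1]
  rw [GG, onTreePath_iff (fV J k) rV (dep J k) (hA1 J k) (hA2 J k) hm]
  rw [h2 x]

lemma interior_iff (q : Q) (x : VV Q k) :
    InLimbInterior (GG J k) (LV q) (startV J q) x ↔
      (x ∈ Sset J q ∧ x ≠ LV q ∧ x ≠ startV J q) := by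
  unfold InLimbInterior
  rw [onPath_iff]

lemma fV_ne_LV (u : VV Q k) (q : Q) : fV J k u ≠ LV q := by
  rcases u with u | (⟨t, c, j⟩ | q')
  · simp [fV, rV, LV]
  · show (if hj : (j : ℕ) = 0 then
        if hc : (qe c : ℕ) = 0 then TOP J k t
        else AV t (qe.symm ⟨(qe c : ℕ) - 1, by have := (qe c).isLt; omega⟩)
          ⟨k + 1, by omega⟩
      else AV t c ⟨(j : ℕ) - 1, by have := j.isLt; omega⟩) ≠ LV q
    split_ifs with h1 h2
    · cases t <;> simp [TOP, rV, AV, LV]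
    · simp [AV, LV]
    · simp [AV, LV]
  · simp [fV, AV, LV]

lemma isLimb_all (q : Q) : IsLimb (GG J k) rV (LV q) (startV J q) := by
  refine ⟨?_, by simp [LV, rV], ?_, by simp [startV, AV, LV]⟩
  · exact isRootedLeaf_of (fV J k) rV (dep J k) (hA1 J k) (hA2 J k) (LV q)
      (fun u _ => fV_ne_LV J k u q)
  · obtain ⟨h1, -⟩ := limb_core J k q
    have := isAncestor_iter (fV J k) rV (dep J k) (hA1 J k) (hA2 J k) (LV q)
      (dep J k (LV q) - dep J k (startV J q)) (Nat.sub_le _ _)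
    rwa [h1] at this

lemma ends_distinct (q q' : Q) (h : q ≠ q') :
    (LV q : VV Q k) ≠ LV q' ∧ (LV q : VV Q k) ≠ startV J q' ∧
      (startV J q : VV Q k) ≠ LV q' ∧ (startV J q : VV Q k) ≠ startV J q' := by
  refine ⟨by simp [LV, h], by simp [LV, startV, AV], by simp [LV, startV, AV], ?_⟩
  simp [startV, AV, h]

lemma parT_adj {a b : Q} (h : parT J b = some a) : J.Adj a b := by
  rw [parT] at h
  by_cases hd : Jd J b = 0
  · rw [if_pos hd] at h
    cases h
  · rw [if_neg hd, Option.some.injEq] at h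
    have hpb := par_adj J b hd
    rw [h] at hpb
    exact hpb.symm

lemma Sset_inter {q₁ q₂ : Q} (hne : q₁ ≠ q₂) {x : VV Q k}
    (h1 : x ∈ Sset J q₁) (h2 : x ∈ Sset J q₂) :
    parT J q₂ = some q₁ ∨ parT J q₁ = some q₂ := by
  rcases h1 with rfl | ⟨c, j, rfl⟩ | ⟨j, rfl⟩
  · rcases h2 with h | ⟨c', j', h⟩ | ⟨j', h⟩
    · exact absurd (by simpa [LV] using h) hne
    · exact absurd h (by simp [LV, AV])
    · exact absurd h (by simp [LV, AV])
  · rcases h2 with h | ⟨c', j', h⟩ | ⟨j', h⟩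
    · exact absurd h (by simp [LV, AV])
    · exfalso
      apply hne
      simp only [AV, Sum.inr.injEq, Sum.inl.injEq, Prod.mk.injEq, Option.some.injEq] at h
      exact h.1
    · left
      simp only [AV, Sum.inr.injEq, Sum.inl.injEq, Prod.mk.injEq] at h
      exact h.1.symm
  · rcases h2 with h | ⟨c', j', h⟩ | ⟨j', h⟩
    · exact absurd h (by simp [LV, AV])
    · right
      simp only [AV, Sum.inr.injEq, Sum.inl.injEq, Prod.mk.injEq] at h
      exact h.1
    · exfalso
      apply hne
      simp only [AV, Sum.inr.injEq, Sum.inl.injEq, Prod.mk.injEq] at h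
      exact h.2.1

lemma overlap_parent {qa qb : Q} (hpar : parT J qb = some qa) (hne : qa ≠ qb)
    (hk : 1 ≤ k) : OverlapRel (GG J k) LV (startV J) k qa qb := by
  rw [OverlapRel]
  set g : Fin k → VV Q k := fun i => AV (some qa) qb ⟨(i : ℕ) + 1, by have := i.isLt; omega⟩
    with hg
  have hginj : Function.Injective g := by
    intro i i' hii
    simp only [hg, AV, Sum.inr.injEq, Sum.inl.injEq, Prod.mk.injEq, Fin.mk.injEq] at hii
    exact Fin.ext (by omega)
  have hsub : Set.range g ⊆ {x | InLimbInterior (GG J k) (LV qa) (startV J qa) x ∧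
      InLimbInterior (GG J k) (LV qb) (startV J qb) x ∧
      ∀ q, q ≠ qa → q ≠ qb → ¬ OnTreePath (GG J k) (LV q) (startV J q) x} := by
    rintro x ⟨i, rfl⟩
    refine ⟨?_, ?_, ?_⟩
    · rw [interior_iff]
      refine ⟨Or.inr (Or.inl ⟨_, _, rfl⟩), by simp [hg, AV, LV], ?_⟩
      simp only [hg, startV, AV, Sum.inr.injEq, Sum.inl.injEq, Prod.mk.injEq, ne_eq]
      rintro ⟨-, hqq, -⟩
      exact hne (hqq.symm)
    · rw [interior_iff]
      refine ⟨Or.inr (Or.inr ⟨_, by rw [hpar]⟩), by simp [hg, AV, LV], ?_⟩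
      simp only [hg, startV, AV, Sum.inr.injEq, Sum.inl.injEq, Prod.mk.injEq, ne_eq,
        Fin.mk.injEq]
      rintro ⟨-, -, hjj⟩
      omega
    · intro q hqa hqb honp
      rw [onPath_iff] at honp
      rcases honp with h | ⟨c, j, h⟩ | ⟨j, h⟩
      · exact absurd h (by simp [hg, AV, LV])
      · simp only [hg, AV, Sum.inr.injEq, Sum.inl.injEq, Prod.mk.injEq,
          Option.some.injEq] at h
        exact hqa h.1.symm
      · simp only [hg, AV, Sum.inr.injEq, Sum.inl.injEq, Prod.mk.injEq] at h
        exact hqb h.2.1.symm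
  calc k = Nat.card (Fin k) := by simp
    _ = Nat.card (Set.range g) := (Nat.card_range_of_injective hginj).symm
    _ = (Set.range g).ncard := Nat.card_coe_set_eq _
    _ ≤ _ := Set.ncard_le_ncard hsub (Set.toFinite _)

end Construction3

section Final
variable {Q : Type} [Fintype Q] (J : SimpleGraph Q) (k : ℕ)

lemma overlap_only_adj (hk : 1 ≤ k) {q₁ q₂ : Q} (hne : q₁ ≠ q₂)
    (h : OverlapRel (GG J k) LV (startV J) k q₁ q₂) : J.Adj q₁ q₂ := by
  rw [OverlapRel] at h
  obtain ⟨x, hx⟩ := Set.nonempty_of_ncard_ne_zero (s :=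
    {x | InLimbInterior (GG J k) (LV q₁) (startV J q₁) x ∧
      InLimbInterior (GG J k) (LV q₂) (startV J q₂) x ∧
      ∀ q, q ≠ q₁ → q ≠ q₂ → ¬ OnTreePath (GG J k) (LV q) (startV J q) x}) (by omega)
  obtain ⟨hi1, hi2, -⟩ := hx
  rw [interior_iff] at hi1 hi2
  rcases Sset_inter J k hne hi1.1 hi2.1 with hp | hp
  · exact parT_adj J hp
  · exact (parT_adj J hp).symm

lemma main_iff (hJ : J.IsAcyclic) (hk : 1 ≤ k) (q₁ q₂ : Q) :
    (SimpleGraph.fromRel (OverlapRel (GG J k) LV (startV J) k)).Adj q₁ q₂ ↔ J.Adj q₁ q₂ := by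
  rw [SimpleGraph.fromRel_adj]
  constructor
  · rintro ⟨hne, h | h⟩
    · exact overlap_only_adj J k hk hne h
    · exact (overlap_only_adj J k hk (Ne.symm hne) h).symm
  · intro hadj
    refine ⟨hadj.ne, ?_⟩
    rcases adj_par_or J hJ hadj with ⟨hd, hp⟩ | ⟨hd, hp⟩
    · right
      have hpT : parT J q₁ = some q₂ := by rw [parT, if_neg hd, hp]
      exact overlap_parent J k hpT hadj.ne' hk
    · left
      have hpT : parT J q₂ = some q₁ := by rw [parT, if_neg hd, hp]
      exact overlap_parent J k hpT hadj.ne hk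

end Final
end Stmt6Aux

/-- Theorem 6.1, getforest: for every finite forest `J` and every `k ≥ 1`
there are a rooted tree `(T, r)` and a family of limbs, indexed by the vertices of `J`, no
two of which share an end, whose `k`-overlap graph is `J` (via the identity on vertices). -/
theorem stmt_6 {Q : Type} [Fintype Q] (J : SimpleGraph Q) (hJ : J.IsAcyclic)
    (k : ℕ) (hk : 1 ≤ k) :
    ∃ (V : Type) (G : SimpleGraph V) (r : V), G.IsTree ∧
      ∃ leaf start : Q → V,
        (∀ q, IsLimb G r (leaf q) (start q)) ∧
        (∀ q q', q ≠ q' → leaf q ≠ leaf q' ∧ leaf q ≠ start q' ∧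
          start q ≠ leaf q' ∧ start q ≠ start q') ∧
        (∀ q₁ q₂, (SimpleGraph.fromRel (OverlapRel G leaf start k)).Adj q₁ q₂ ↔
          J.Adj q₁ q₂) := by
  classical
  exact ⟨Stmt6Aux.VV Q k, Stmt6Aux.GG J k, Stmt6Aux.rV, Stmt6Aux.GG_isTree J k,
    Stmt6Aux.LV, Stmt6Aux.startV J,
    fun q => Stmt6Aux.isLimb_all J k q,
    fun q q' h => Stmt6Aux.ends_distinct J k q q' h,
    Stmt6Aux.main_iff J k hJ hk⟩
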